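/- Let C be a regular category with enough projectives whose projectives are closed under finite limits. Then the ex/reg-completion of C is equivalent to the ex/lex-completion of the full subcategory Proj(C) of projective objects of C. -/

import Mathlib

open CategoryTheory CategoryTheory.Limits

universe v u v₂ u₂ v₃ u₃

/-- A morphism is a cover if the only subobject of its codomain through which
it factors is the maximal one. -/
def IsCover {C : Type u} [Category.{v} C] {X Y : C} (f : Y ⟶ X) : Prop :=
  ∀ ⦃Z : C⦄ (m : Z ⟶ X) (g : Y ⟶ Z), Mono m → g ≫ m = f → IsIso m

/-- An object is projective (w.r.t. covers) if every cover onto it splits. -/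
def CovProjective {C : Type u} [Category.{v} C] (P : C) : Prop :=
  ∀ ⦃X : C⦄ (q : X ⟶ P), IsCover q → ∃ s : P ⟶ X, s ≫ q = 𝟙 P

/-- A category has enough projectives if every object is covered by a projective. -/
def HasEnoughCovProjectives (C : Type u) [Category.{v} C] : Prop :=
  ∀ X : C, ∃ (P : C) (q : P ⟶ X), CovProjective P ∧ IsCover q

/-- A regular category: finite limits, cover-mono factorizations,
and covers stable under pullback. -/
class RegularCat (C : Type u) [Category.{v} C] extends HasFiniteLimits C : Prop where
  factor : ∀ {X Y : C} (f : X ⟶ Y), ∃ (Z : C) (e : X ⟶ Z) (m : Z ⟶ Y),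
    IsCover e ∧ Mono m ∧ e ≫ m = f
  pullback_cover : ∀ {X Y Z L : C} (f : X ⟶ Y) (g : Z ⟶ Y)
    (p₁ : L ⟶ X) (p₂ : L ⟶ Z), IsPullback p₁ p₂ f g → IsCover f → IsCover p₂
section Exactness

variable {C : Type u} [Category.{v} C]

/-- The relation on generalized elements induced by a relation r : R ⟶ X ⨯ X. -/
def relOf [HasFiniteLimits C] {R X : C} (r : R ⟶ X ⨯ X) {A : C} (x y : A ⟶ X) : Prop :=
  ∃ a : A ⟶ R, a ≫ r = prod.lift x y

/-- r : R ⟶ X ⨯ X is an equivalence relation: it is a subobject of X ⨯ X and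
induces an equivalence relation on every hom-set Hom(A, X). -/
structure IsEquivRel [HasFiniteLimits C] {R X : C} (r : R ⟶ X ⨯ X) : Prop where
  mono : Mono r
  iseqv : ∀ A : C, Equivalence (fun x y : A ⟶ X => relOf r x y)

/-- The fork r₀, r₁ ⇉ X → Q is exact: it is both a pullback and a coequalizer. -/
structure IsExactFork {R X Q : C} (r₀ r₁ : R ⟶ X) (q : X ⟶ Q) : Prop where
  w : r₀ ≫ q = r₁ ≫ q
  isPullback : IsPullback r₀ r₁ q q
  isCoequalizer : Nonempty (IsColimit (Cofork.ofπ q w))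

/-- The fork is stably exact: it is exact and remains exact after pullback
along any map P ⟶ Q. -/
def IsStablyExactFork [HasFiniteLimits C] {R X Q : C} (r₀ r₁ : R ⟶ X) (q : X ⟶ Q) : Prop :=
  ∃ w : r₀ ≫ q = r₁ ≫ q, Nonempty (IsColimit (Cofork.ofπ q w)) ∧ IsPullback r₀ r₁ q q ∧
    ∀ {P : C} (p : P ⟶ Q),
      IsExactFork
        (pullback.lift (pullback.fst (r₀ ≫ q) p ≫ r₀) (pullback.snd (r₀ ≫ q) p)
          (by simpa using pullback.condition) :
            pullback (r₀ ≫ q) p ⟶ pullback q p)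
        (pullback.lift (pullback.fst (r₀ ≫ q) p ≫ r₁) (pullback.snd (r₀ ≫ q) p)
          (by rw [Category.assoc, ← w]; simpa using pullback.condition))
        (pullback.snd q p)

/-- An exact category: regular, and every equivalence relation fits into a
stably exact fork. -/
class ExactCat (C : Type u) [Category.{v} C] extends RegularCat C : Prop where
  exact_quotient : ∀ {R X : C} (r : R ⟶ X ⨯ X), IsEquivRel r →
    ∃ (Q : C) (q : X ⟶ Q), IsStablyExactFork (r ≫ prod.fst) (r ≫ prod.snd) q

end Exactness

attribute [local simp] prod.lift_fst prod.lift_snd pullback.lift_fst pullback.lift_snd prod.lift_fst_assoc prod.lift_snd_assoc pullback.lift_fst_assoc pullback.lift_snd_assoc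

section Covers

variable {C : Type u} [Category.{v} C]

theorem IsCover.isIso {X Y : C} {f : Y ⟶ X} (hf : IsCover f) (hm : Mono f) : IsIso f :=
  hf f (𝟙 Y) hm (Category.id_comp f)

theorem isCover_of_comp_left {X Y Z : C} (e : X ⟶ Y) (f : Y ⟶ Z) (h : IsCover (e ≫ f)) :
    IsCover f := fun _ m g hm hgm => h m (e ≫ g) hm (by rw [Category.assoc, hgm])

theorem IsCover.comp_iso {X Y Z : C} {f : Y ⟶ X} (hf : IsCover f) (i : X ⟶ Z) [IsIso i] :
    IsCover (f ≫ i) := by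
  intro W m g hm hgm
  have h1 : g ≫ m ≫ inv i = f := by
    rw [← Category.assoc, hgm, Category.assoc, IsIso.hom_inv_id, Category.comp_id]
  have h2 : IsIso (m ≫ inv i) := hf (m ≫ inv i) g (mono_comp m (inv i)) h1
  have : m = (m ≫ inv i) ≫ i := by simp
  rw [this]; infer_instance

theorem isCover_of_isIso {X Y : C} (f : Y ⟶ X) [IsIso f] : IsCover f := by
  intro W m g hm hgm
  have : IsSplitEpi m := ⟨⟨⟨inv f ≫ g, by simp [hgm]⟩⟩⟩
  exact isIso_of_mono_of_isSplitEpi m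

/-- Covers are epimorphisms (needs equalizers). -/
theorem IsCover.epi [HasFiniteLimits C] {X Y : C} {f : Y ⟶ X} (hf : IsCover f) : Epi f := by
  constructor
  intro W a b hab
  have hfl : f ≫ a = f ≫ b := hab
  have h2 : IsIso (equalizer.ι a b) :=
    hf (equalizer.ι a b) (equalizer.lift f hfl) inferInstance (equalizer.lift_ι f hfl)
  rw [← cancel_epi (equalizer.ι a b), equalizer.condition]

/-- Orthogonality: a cover composed into a mono lifts. -/
theorem IsCover.lift_mono [HasFiniteLimits C] {A' A S B : C} {c : A' ⟶ A} (hc : IsCover c)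
    (m : S ⟶ B) (h : A ⟶ B) (g : A' ⟶ S) (hm : Mono m) (hfac : c ≫ h = g ≫ m) :
    ∃ k : A ⟶ S, k ≫ m = h := by
  have : Mono (pullback.snd m h) := inferInstance
  have hiso : IsIso (pullback.snd m h) :=
    hc (pullback.snd m h) (pullback.lift g c hfac.symm) this (pullback.lift_snd _ _ _)
  exact ⟨inv (pullback.snd m h) ≫ pullback.fst m h, by
    rw [Category.assoc, pullback.condition, ← Category.assoc, IsIso.inv_hom_id,
      Category.id_comp]⟩

/-- Covers compose, in a regular category. -/
theorem IsCover.comp [RegularCat C] {X Y Z : C} {e : X ⟶ Y} {f : Y ⟶ Z}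
    (he : IsCover e) (hf : IsCover f) : IsCover (e ≫ f) := by
  intro W m g hm hgm
  -- pull back m along f
  have hm' : Mono (pullback.snd m f) := inferInstance
  have hlift : (pullback.lift g e (by rw [hgm])) ≫ pullback.snd m f = e :=
    pullback.lift_snd _ _ _
  have hiso' : IsIso (pullback.snd m f) := he _ _ hm' hlift
  -- then f factors through m
  have hfac : f = inv (pullback.snd m f) ≫ pullback.fst m f ≫ m := by
    rw [pullback.condition, ← Category.assoc (inv _), IsIso.inv_hom_id, Category.id_comp]
  exact hf m (inv (pullback.snd m f) ≫ pullback.fst m f) hm (by rw [Category.assoc, ← hfac])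

/-- The π of a coequalizer cofork is a cover. -/
theorem isCover_of_isColimit_cofork {A B Q : C} {a b : A ⟶ B} {q : B ⟶ Q} {w : a ≫ q = b ≫ q}
    (h : IsColimit (Cofork.ofπ q w)) : IsCover q := by
  intro Z m g hm hgm
  have hq : Epi q := by
    constructor
    intro W x y hxy
    exact Cofork.IsColimit.hom_ext h (by simpa using hxy)
  have hcoeq : a ≫ g = b ≫ g := by
    rw [← cancel_mono m, Category.assoc, Category.assoc, hgm, w]
  obtain ⟨d, hd⟩ := Cofork.IsColimit.desc' h g hcoeq
  have hd' : q ≫ d = g := hd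
  have : q ≫ d ≫ m = q ≫ 𝟙 Q := by
    rw [← Category.assoc, hd', hgm, Category.comp_id]
  have hdm : d ≫ m = 𝟙 Q := by rwa [cancel_epi q] at this
  have : IsSplitEpi m := ⟨⟨⟨d, hdm⟩⟩⟩
  exact isIso_of_mono_of_isSplitEpi m

/-- Projectivity gives lifting along covers, in a regular category. -/
theorem CovProjective.lift [RegularCat C] {P Z W : C} (hP : CovProjective P)
    {c : Z ⟶ W} (hc : IsCover c) (g : P ⟶ W) : ∃ l : P ⟶ Z, l ≫ c = g := by
  have hpb : IsPullback (pullback.fst c g) (pullback.snd c g) c g := IsPullback.of_hasPullback c g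
  have hcov : IsCover (pullback.snd c g) := RegularCat.pullback_cover c g _ _ hpb hc
  obtain ⟨s, hs⟩ := hP _ hcov
  exact ⟨s ≫ pullback.fst c g, by rw [Category.assoc, pullback.condition, ← Category.assoc,
    hs, Category.id_comp]⟩

end Covers

section Desc

variable {C : Type u} [Category.{v} C]

theorem relOf_kernelPair_iff [HasFiniteLimits C] {X Y A : C} (q : X ⟶ Y) (x y : A ⟶ X) :
    relOf (prod.lift (pullback.fst q q) (pullback.snd q q)) x y ↔ x ≫ q = y ≫ q := by
  constructor
  · rintro ⟨a, ha⟩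
    have h0 : x = a ≫ pullback.fst q q := by
      have := congrArg (· ≫ prod.fst) ha
      simpa using this.symm
    have h1 : y = a ≫ pullback.snd q q := by
      have := congrArg (· ≫ prod.snd) ha
      simpa using this.symm
    rw [h0, h1, Category.assoc, Category.assoc, pullback.condition]
  · intro h
    exact ⟨pullback.lift x y h, by apply Limits.prod.hom_ext <;> simp⟩

theorem kernelPair_isEquivRel [HasFiniteLimits C] {X Y : C} (q : X ⟶ Y) :
    IsEquivRel (prod.lift (pullback.fst q q) (pullback.snd q q)) := by
  constructor
  · constructor
    intro Z a b hab
    apply pullback.hom_ext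
    · have := congrArg (· ≫ prod.fst) hab; simpa using this
    · have := congrArg (· ≫ prod.snd) hab; simpa using this
  · intro A
    constructor
    · intro x
      rw [relOf_kernelPair_iff]
    · intro x y h
      rw [relOf_kernelPair_iff] at h ⊢
      exact h.symm
    · intro x y z h1 h2
      rw [relOf_kernelPair_iff] at h1 h2 ⊢
      exact h1.trans h2

/-- In an exact category, a cover coequalizes (and descends along) its kernel pair. -/
theorem IsCover.desc [ExactCat C] {X Y W : C} {q : X ⟶ Y} (hq : IsCover q) (h : X ⟶ W)
    (hw : pullback.fst q q ≫ h = pullback.snd q q ≫ h) : ∃ d : Y ⟶ W, q ≫ d = h := by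
  set r := prod.lift (pullback.fst q q) (pullback.snd q q) with hr
  obtain ⟨Q, q₂, w₂, ⟨colim⟩, pb₂, -⟩ := ExactCat.exact_quotient r (kernelPair_isEquivRel q)
  have hrf : r ≫ prod.fst = pullback.fst q q := by simp [hr]
  have hrs : r ≫ prod.snd = pullback.snd q q := by simp [hr]
  have wq : (r ≫ prod.fst) ≫ q = (r ≫ prod.snd) ≫ q := by
    rw [hrf, hrs, pullback.condition]
  obtain ⟨u, hu'⟩ := Cofork.IsColimit.desc' colim q wq
  have hu : q₂ ≫ u = q := hu'
  have hq₂ : IsCover q₂ := isCover_of_isColimit_cofork colim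
  have hucov : IsCover u := isCover_of_comp_left q₂ u (by rwa [hu])
  have w₂' : pullback.fst q q ≫ q₂ = pullback.snd q q ≫ q₂ := by
    rw [← hrf, ← hrs]
    exact w₂
  have humono : Mono u := by
    constructor
    intro Z a b hab
    have pcA : pullback.fst q₂ a ≫ q₂ = pullback.snd q₂ a ≫ a := pullback.condition
    have pcB : pullback.fst q₂ (pullback.snd q₂ a ≫ b) ≫ q₂ =
        pullback.snd q₂ (pullback.snd q₂ a ≫ b) ≫ (pullback.snd q₂ a ≫ b) :=
      pullback.condition
    have hkcov : IsCover (pullback.snd q₂ a) :=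
      RegularCat.pullback_cover q₂ a _ _ (IsPullback.of_hasPullback q₂ a) hq₂
    have hk'cov : IsCover (pullback.snd q₂ (pullback.snd q₂ a ≫ b)) :=
      RegularCat.pullback_cover q₂ (pullback.snd q₂ a ≫ b) _ _
        (IsPullback.of_hasPullback q₂ (pullback.snd q₂ a ≫ b)) hq₂
    set k := pullback.snd q₂ a
    set j := pullback.fst q₂ a
    set k' := pullback.snd q₂ (k ≫ b)
    set j' := pullback.fst q₂ (k ≫ b)
    have hx : (k' ≫ j) ≫ q = j' ≫ q := by
      rw [← hu]
      calc (k' ≫ j) ≫ q₂ ≫ u = k' ≫ (j ≫ q₂) ≫ u := by simp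
        _ = k' ≫ (k ≫ a) ≫ u := by rw [pcA]
        _ = k' ≫ k ≫ (b ≫ u) := by simp only [Category.assoc]; rw [hab]
        _ = (k' ≫ (k ≫ b)) ≫ u := by simp
        _ = (j' ≫ q₂) ≫ u := by rw [pcB]
        _ = j' ≫ q₂ ≫ u := by simp
    have h1 : pullback.lift (k' ≫ j) j' hx ≫ pullback.fst q q = k' ≫ j :=
      pullback.lift_fst _ _ _
    have h2 : pullback.lift (k' ≫ j) j' hx ≫ pullback.snd q q = j' :=
      pullback.lift_snd _ _ _
    have hq₂eq : (k' ≫ j) ≫ q₂ = j' ≫ q₂ := by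
      calc (k' ≫ j) ≫ q₂ = (pullback.lift (k' ≫ j) j' hx ≫ pullback.fst q q) ≫ q₂ := by
            rw [h1]
        _ = pullback.lift (k' ≫ j) j' hx ≫ (pullback.fst q q ≫ q₂) := by simp
        _ = pullback.lift (k' ≫ j) j' hx ≫ (pullback.snd q q ≫ q₂) := by rw [w₂']
        _ = (pullback.lift (k' ≫ j) j' hx ≫ pullback.snd q q) ≫ q₂ := by simp
        _ = j' ≫ q₂ := by rw [h2]
    have key : (k' ≫ k) ≫ a = (k' ≫ k) ≫ b := by
      calc (k' ≫ k) ≫ a = k' ≫ (j ≫ q₂) := by rw [pcA, Category.assoc]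
        _ = j' ≫ q₂ := by rw [← Category.assoc, hq₂eq]
        _ = k' ≫ (k ≫ b) := by rw [pcB]
        _ = (k' ≫ k) ≫ b := by simp
    have hepi : Epi (k' ≫ k) := (hk'cov.comp hkcov).epi
    exact (cancel_epi _).mp key
  have huiso : IsIso u := hucov.isIso humono
  have hwh : (r ≫ prod.fst) ≫ h = (r ≫ prod.snd) ≫ h := by rw [hrf, hrs, hw]
  obtain ⟨d₂, hd₂'⟩ := Cofork.IsColimit.desc' colim h hwh
  have hd₂ : q₂ ≫ d₂ = h := hd₂'
  refine ⟨inv u ≫ d₂, ?_⟩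
  calc q ≫ inv u ≫ d₂ = (q₂ ≫ u) ≫ inv u ≫ d₂ := by rw [hu]
    _ = q₂ ≫ d₂ := by simp
    _ = h := hd₂

end Desc

section PCD

/-- Data exhibiting `D` as having enough projectives indexed by a category `P`. -/
structure PCD (P : Type u₃) [Category.{v₃} P] (D : Type u) [Category.{v} D] where
  z : P ⥤ D
  full : z.Full
  faithful : z.Faithful
  proj : ∀ A : P, CovProjective (z.obj A)
  covering : ∀ X : D, ∃ (A : P) (c : z.obj A ⟶ X), IsCover c

variable {P : Type u₃} [Category.{v₃} P] {D : Type u} [Category.{v} D]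

/-- A projective presentation of `X` with pseudo-kernel-pair data. -/
structure PCD.Pres [HasFiniteLimits D] (E : PCD P D) (X : D) where
  A : P
  q : E.z.obj A ⟶ X
  hq : IsCover q
  T : P
  t₀ : T ⟶ A
  t₁ : T ⟶ A
  w : E.z.map t₀ ≫ q = E.z.map t₁ ≫ q
  he : IsCover (pullback.lift (E.z.map t₀) (E.z.map t₁) w : E.z.obj T ⟶ pullback q q)

theorem PCD.pres_exists [HasFiniteLimits D] (E : PCD P D) (X : D) : Nonempty (E.Pres X) := by
  haveI := E.full; haveI := E.faithful
  obtain ⟨A, q, hq⟩ := E.covering X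
  obtain ⟨T, c, hc⟩ := E.covering (pullback q q)
  have w : E.z.map (E.z.preimage (c ≫ pullback.fst q q)) ≫ q =
      E.z.map (E.z.preimage (c ≫ pullback.snd q q)) ≫ q := by
    rw [E.z.map_preimage, E.z.map_preimage, Category.assoc, Category.assoc,
      pullback.condition]
  refine ⟨⟨A, q, hq, T, E.z.preimage (c ≫ pullback.fst q q),
    E.z.preimage (c ≫ pullback.snd q q), w, ?_⟩⟩
  have heq : (pullback.lift (E.z.map (E.z.preimage (c ≫ pullback.fst q q)))
      (E.z.map (E.z.preimage (c ≫ pullback.snd q q))) w :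
        E.z.obj T ⟶ pullback q q) = c := by
    apply pullback.hom_ext <;> simp
  rw [heq]
  exact hc

/-- The pseudo-kernel pair exactly captures the kernel pair of `q` on
generalized elements from `P`. -/
theorem PCD.Pres.ker [RegularCat D] {E : PCD P D} {X : D} (pr : E.Pres X) {B : P}
    (u v : B ⟶ pr.A) :
    E.z.map u ≫ pr.q = E.z.map v ≫ pr.q ↔
      ∃ h : B ⟶ pr.T, h ≫ pr.t₀ = u ∧ h ≫ pr.t₁ = v := by
  haveI := E.full; haveI := E.faithful
  constructor
  · intro hqq
    obtain ⟨l, hl⟩ := (E.proj B).lift pr.he (pullback.lift (E.z.map u) (E.z.map v) hqq)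
    refine ⟨E.z.preimage l, ?_, ?_⟩
    · apply E.z.map_injective
      rw [E.z.map_comp, E.z.map_preimage]
      calc l ≫ E.z.map pr.t₀
          = l ≫ pullback.lift (E.z.map pr.t₀) (E.z.map pr.t₁) pr.w ≫ pullback.fst pr.q pr.q := by
            simp
        _ = pullback.lift (E.z.map u) (E.z.map v) hqq ≫ pullback.fst pr.q pr.q := by
            rw [← Category.assoc, hl]
        _ = E.z.map u := by simp
    · apply E.z.map_injective
      rw [E.z.map_comp, E.z.map_preimage]
      calc l ≫ E.z.map pr.t₁
          = l ≫ pullback.lift (E.z.map pr.t₀) (E.z.map pr.t₁) pr.w ≫ pullback.snd pr.q pr.q := by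
            simp
        _ = pullback.lift (E.z.map u) (E.z.map v) hqq ≫ pullback.snd pr.q pr.q := by
            rw [← Category.assoc, hl]
        _ = E.z.map v := by simp
  · rintro ⟨h, h0, h1⟩
    rw [← h0, ← h1, E.z.map_comp, E.z.map_comp, Category.assoc, Category.assoc, pr.w]

theorem PCD.Pres.equiv [RegularCat D] {E : PCD P D} {X : D} (pr : E.Pres X) (B : P) :
    Equivalence (fun u v : B ⟶ pr.A => ∃ h : B ⟶ pr.T, h ≫ pr.t₀ = u ∧ h ≫ pr.t₁ = v) := by
  constructor
  · intro u; exact (pr.ker u u).mp rfl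
  · intro u v h; exact (pr.ker v u).mp ((pr.ker u v).mpr h).symm
  · intro u v w h1 h2
    exact (pr.ker u w).mp (((pr.ker u v).mpr h1).trans ((pr.ker v w).mpr h2))

/-- A quotient of a pseudo-equivalence relation, with its universal properties. -/
structure PseudoQuot {D' : Type u₂} [Category.{v₂} D'] (E' : PCD P D') {A T : P}
    (t₀ t₁ : T ⟶ A) where
  Q : D'
  π : E'.z.obj A ⟶ Q
  hπ : IsCover π
  w : E'.z.map t₀ ≫ π = E'.z.map t₁ ≫ π
  desc_exists : ∀ {W : D'} (h : E'.z.obj A ⟶ W),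
    E'.z.map t₀ ≫ h = E'.z.map t₁ ≫ h → ∃ d : Q ⟶ W, π ≫ d = h
  ker : ∀ {B : P} (u v : B ⟶ A), E'.z.map u ≫ π = E'.z.map v ≫ π ↔
    ∃ h : B ⟶ T, h ≫ t₀ = u ∧ h ≫ t₁ = v

theorem pseudoQuot_exists {D' : Type u₂} [Category.{v₂} D'] [ExactCat D'] (E' : PCD P D')
    {A T : P} (t₀ t₁ : T ⟶ A)
    (hrel : ∀ B : P, Equivalence fun u v : B ⟶ A => ∃ h : B ⟶ T, h ≫ t₀ = u ∧ h ≫ t₁ = v) :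
    Nonempty (PseudoQuot E' t₀ t₁) := by
  haveI := E'.full; haveI := E'.faithful
  obtain ⟨R, e, r, he, hm, hfac⟩ :=
    RegularCat.factor (prod.lift (E'.z.map t₀) (E'.z.map t₁))
  haveI : Mono r := hm
  have er0 : e ≫ (r ≫ prod.fst) = E'.z.map t₀ := by rw [← Category.assoc, hfac]; simp
  have er1 : e ≫ (r ≫ prod.snd) = E'.z.map t₁ := by rw [← Category.assoc, hfac]; simp
  -- characterization of the relation on elements from P
  have relchar : ∀ {B : P} (u v : B ⟶ A),
      relOf r (E'.z.map u) (E'.z.map v) ↔ ∃ h : B ⟶ T, h ≫ t₀ = u ∧ h ≫ t₁ = v := by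
    intro B u v
    constructor
    · rintro ⟨a, ha⟩
      obtain ⟨l, hl⟩ := (E'.proj B).lift he a
      refine ⟨E'.z.preimage l, ?_, ?_⟩
      · apply E'.z.map_injective
        rw [E'.z.map_comp, E'.z.map_preimage]
        calc l ≫ E'.z.map t₀ = l ≫ e ≫ (r ≫ prod.fst) := by rw [er0]
          _ = (a ≫ r) ≫ prod.fst := by rw [← Category.assoc, hl, Category.assoc]
          _ = E'.z.map u := by rw [ha]; simp
      · apply E'.z.map_injective
        rw [E'.z.map_comp, E'.z.map_preimage]
        calc l ≫ E'.z.map t₁ = l ≫ e ≫ (r ≫ prod.snd) := by rw [er1]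
          _ = (a ≫ r) ≫ prod.snd := by rw [← Category.assoc, hl, Category.assoc]
          _ = E'.z.map v := by rw [ha]; simp
    · rintro ⟨h, h0, h1⟩
      refine ⟨E'.z.map h ≫ e, ?_⟩
      rw [Category.assoc, hfac, prod.comp_lift, ← E'.z.map_comp, ← E'.z.map_comp, h0, h1]
  -- descent of the relation along covers
  have descent : ∀ {A₀ : D'} {B : P} (c : E'.z.obj B ⟶ A₀) (_ : IsCover c)
      (x y : A₀ ⟶ E'.z.obj A), relOf r x y ↔ relOf r (c ≫ x) (c ≫ y) := by
    intro A₀ B c hc x y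
    constructor
    · rintro ⟨a, ha⟩
      exact ⟨c ≫ a, by rw [Category.assoc, ha, prod.comp_lift]⟩
    · rintro ⟨a, ha⟩
      obtain ⟨k, hk⟩ := hc.lift_mono r (prod.lift x y) a inferInstance
        (by rw [prod.comp_lift, ha])
      exact ⟨k, hk⟩
  have hequiv : IsEquivRel r := by
    constructor
    · exact hm
    · intro A₀
      obtain ⟨B, c, hc⟩ := E'.covering A₀
      constructor
      · intro x
        rw [descent c hc]
        have hx : c ≫ x = E'.z.map (E'.z.preimage (c ≫ x)) := (E'.z.map_preimage _).symm
        rw [hx]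
        exact (relchar _ _).mpr ((hrel B).refl _)
      · intro x y hxy
        rw [descent c hc] at hxy ⊢
        have hx : c ≫ x = E'.z.map (E'.z.preimage (c ≫ x)) := (E'.z.map_preimage _).symm
        have hy : c ≫ y = E'.z.map (E'.z.preimage (c ≫ y)) := (E'.z.map_preimage _).symm
        rw [hx, hy] at hxy ⊢
        exact (relchar _ _).mpr ((hrel B).symm ((relchar _ _).mp hxy))
      · intro x y zz hxy hyz
        rw [descent c hc] at hxy hyz ⊢
        have hx : c ≫ x = E'.z.map (E'.z.preimage (c ≫ x)) := (E'.z.map_preimage _).symm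
        have hy : c ≫ y = E'.z.map (E'.z.preimage (c ≫ y)) := (E'.z.map_preimage _).symm
        have hz : c ≫ zz = E'.z.map (E'.z.preimage (c ≫ zz)) := (E'.z.map_preimage _).symm
        rw [hx, hy] at hxy
        rw [hy, hz] at hyz
        rw [hx, hz]
        exact (relchar _ _).mpr
          ((hrel B).trans ((relchar _ _).mp hxy) ((relchar _ _).mp hyz))
  obtain ⟨Q, q', w', ⟨colim⟩, pb', -⟩ := ExactCat.exact_quotient r hequiv
  have epie : Epi e := he.epi
  have w2 : r ≫ prod.fst ≫ q' = r ≫ prod.snd ≫ q' := by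
    simpa only [Category.assoc] using w'
  have wzt : E'.z.map t₀ ≫ q' = E'.z.map t₁ ≫ q' := by
    rw [← er0, ← er1]
    simp only [Category.assoc]
    rw [w2]
  refine ⟨⟨Q, q', isCover_of_isColimit_cofork colim, wzt, ?_, ?_⟩⟩
  · intro W h hw
    have hw2 : (r ≫ prod.fst) ≫ h = (r ≫ prod.snd) ≫ h := by
      rw [← cancel_epi e]
      calc e ≫ (r ≫ prod.fst) ≫ h = (e ≫ r ≫ prod.fst) ≫ h := by simp
        _ = E'.z.map t₀ ≫ h := by rw [er0]
        _ = E'.z.map t₁ ≫ h := hw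
        _ = (e ≫ r ≫ prod.snd) ≫ h := by rw [er1]
        _ = e ≫ (r ≫ prod.snd) ≫ h := by simp
    obtain ⟨d, hd⟩ := Cofork.IsColimit.desc' colim h hw2
    exact ⟨d, hd⟩
  · intro B u v
    constructor
    · intro huv
      have ha : pb'.lift (E'.z.map u) (E'.z.map v) huv ≫ r =
          prod.lift (E'.z.map u) (E'.z.map v) := by
        apply Limits.prod.hom_ext
        · rw [Category.assoc]
          simpa using pb'.lift_fst (E'.z.map u) (E'.z.map v) huv
        · rw [Category.assoc]
          simpa using pb'.lift_snd (E'.z.map u) (E'.z.map v) huv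

      exact (relchar u v).mp ⟨_, ha⟩
    · rintro ⟨h, h0, h1⟩
      rw [← h0, ← h1, E'.z.map_comp, E'.z.map_comp, Category.assoc, Category.assoc, wzt]

end PCD

section Transfer

variable {P : Type u₃} [Category.{v₃} P] {D : Type u} [Category.{v} D]
  {D' : Type u₂} [Category.{v₂} D'] [ExactCat D] [ExactCat D']

variable (E : PCD P D) (E' : PCD P D')

noncomputable def PCD.pres' (X : D) : E.Pres X := (E.pres_exists X).some

noncomputable def PCD.quot (X : D) : PseudoQuot E' (E.pres' X).t₀ (E.pres' X).t₁ :=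
  (pseudoQuot_exists E' _ _ (fun B => (E.pres' X).equiv B)).some

theorem PCD.char {X : D} {B : P} (u v : B ⟶ (E.pres' X).A) :
    E.z.map u ≫ (E.pres' X).q = E.z.map v ≫ (E.pres' X).q ↔
      E'.z.map u ≫ (E.quot E' X).π = E'.z.map v ≫ (E.quot E' X).π :=
  ((E.pres' X).ker u v).trans ((E.quot E' X).ker u v).symm

theorem PCD.lift_exists {X Y : D} (f : X ⟶ Y) :
    ∃ g : (E.pres' X).A ⟶ (E.pres' Y).A,
      E.z.map g ≫ (E.pres' Y).q = (E.pres' X).q ≫ f := by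
  haveI := E.full
  obtain ⟨l, hl⟩ := (E.proj (E.pres' X).A).lift (E.pres' Y).hq ((E.pres' X).q ≫ f)
  exact ⟨E.z.preimage l, by rwa [E.z.map_preimage]⟩

theorem PCD.tmap_aux {X Y : D} (f : X ⟶ Y) (g : (E.pres' X).A ⟶ (E.pres' Y).A)
    (hg : E.z.map g ≫ (E.pres' Y).q = (E.pres' X).q ≫ f) :
    E'.z.map (E.pres' X).t₀ ≫ (E'.z.map g ≫ (E.quot E' Y).π) =
      E'.z.map (E.pres' X).t₁ ≫ (E'.z.map g ≫ (E.quot E' Y).π) := by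
  rw [← Category.assoc, ← Category.assoc, ← E'.z.map_comp, ← E'.z.map_comp,
    ← E.char E']
  calc E.z.map ((E.pres' X).t₀ ≫ g) ≫ (E.pres' Y).q
      = E.z.map (E.pres' X).t₀ ≫ (E.z.map g ≫ (E.pres' Y).q) := by
        rw [E.z.map_comp, Category.assoc]
    _ = (E.z.map (E.pres' X).t₀ ≫ (E.pres' X).q) ≫ f := by rw [hg, Category.assoc]
    _ = (E.z.map (E.pres' X).t₁ ≫ (E.pres' X).q) ≫ f := by rw [(E.pres' X).w]
    _ = E.z.map (E.pres' X).t₁ ≫ (E.z.map g ≫ (E.pres' Y).q) := by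
        rw [hg, Category.assoc]
    _ = E.z.map ((E.pres' X).t₁ ≫ g) ≫ (E.pres' Y).q := by
        rw [E.z.map_comp, Category.assoc]

noncomputable def PCD.tmap {X Y : D} (f : X ⟶ Y) : (E.quot E' X).Q ⟶ (E.quot E' Y).Q :=
  ((E.quot E' X).desc_exists
    (E'.z.map (E.lift_exists f).choose ≫ (E.quot E' Y).π)
    (E.tmap_aux E' f (E.lift_exists f).choose (E.lift_exists f).choose_spec)).choose

theorem PCD.tmap_fac0 {X Y : D} (f : X ⟶ Y) :
    (E.quot E' X).π ≫ E.tmap E' f =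
      E'.z.map (E.lift_exists f).choose ≫ (E.quot E' Y).π :=
  ((E.quot E' X).desc_exists
    (E'.z.map (E.lift_exists f).choose ≫ (E.quot E' Y).π)
    (E.tmap_aux E' f (E.lift_exists f).choose (E.lift_exists f).choose_spec)).choose_spec

theorem PCD.tmap_fac {X Y : D} (f : X ⟶ Y) (g : (E.pres' X).A ⟶ (E.pres' Y).A)
    (hg : E.z.map g ≫ (E.pres' Y).q = (E.pres' X).q ≫ f) :
    (E.quot E' X).π ≫ E.tmap E' f = E'.z.map g ≫ (E.quot E' Y).π := by
  rw [E.tmap_fac0 E' f]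
  exact (E.char E' _ _).mp ((E.lift_exists f).choose_spec.trans hg.symm)

noncomputable def PCD.transfer : D ⥤ D' where
  obj X := (E.quot E' X).Q
  map f := E.tmap E' f
  map_id X := by
    haveI : Epi (E.quot E' X).π := (E.quot E' X).hπ.epi
    rw [← cancel_epi (E.quot E' X).π,
      E.tmap_fac E' (𝟙 X) (𝟙 _) (by simp), E'.z.map_id, Category.id_comp,
      Category.comp_id]
  map_comp {X Y Z} f g := by
    haveI : Epi (E.quot E' X).π := (E.quot E' X).hπ.epi
    rw [← cancel_epi (E.quot E' X).π]
    have hf := E.tmap_fac0 E' f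
    have hg := E.tmap_fac0 E' g
    have hfg := E.tmap_fac E' (f ≫ g)
      ((E.lift_exists f).choose ≫ (E.lift_exists g).choose)
      (by rw [E.z.map_comp, Category.assoc, (E.lift_exists g).choose_spec,
        ← Category.assoc, (E.lift_exists f).choose_spec, Category.assoc])
    rw [hfg, ← Category.assoc, hf, Category.assoc, hg, E'.z.map_comp, Category.assoc]

end Transfer

section Unit

variable {P : Type u₃} [Category.{v₃} P] {D : Type u} [Category.{v} D]
  {D' : Type u₂} [Category.{v₂} D'] [ExactCat D] [ExactCat D']

variable (E : PCD P D) (E' : PCD P D')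

theorem PCD.kmap_exists (X : D) :
    ∃ k : (E'.pres' ((E.quot E' X).Q)).A ⟶ (E.pres' X).A,
      E'.z.map k ≫ (E.quot E' X).π = (E'.pres' ((E.quot E' X).Q)).q := by
  haveI := E'.full
  obtain ⟨l, hl⟩ := (E'.proj _).lift (E.quot E' X).hπ (E'.pres' ((E.quot E' X).Q)).q
  exact ⟨E'.z.preimage l, by rwa [E'.z.map_preimage]⟩

noncomputable def PCD.kmap (X : D) : (E'.pres' ((E.quot E' X).Q)).A ⟶ (E.pres' X).A :=
  (E.kmap_exists E' X).choose

theorem PCD.kmap_spec (X : D) :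
    E'.z.map (E.kmap E' X) ≫ (E.quot E' X).π = (E'.pres' ((E.quot E' X).Q)).q :=
  (E.kmap_exists E' X).choose_spec

theorem PCD.lmap_exists (X : D) :
    ∃ l : (E.pres' X).A ⟶ (E'.pres' ((E.quot E' X).Q)).A,
      E'.z.map l ≫ (E'.pres' ((E.quot E' X).Q)).q = (E.quot E' X).π := by
  haveI := E'.full
  obtain ⟨l, hl⟩ := (E'.proj _).lift (E'.pres' ((E.quot E' X).Q)).hq (E.quot E' X).π
  exact ⟨E'.z.preimage l, by rwa [E'.z.map_preimage]⟩

noncomputable def PCD.lmap (X : D) : (E.pres' X).A ⟶ (E'.pres' ((E.quot E' X).Q)).A :=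
  (E.lmap_exists E' X).choose

theorem PCD.lmap_spec (X : D) :
    E'.z.map (E.lmap E' X) ≫ (E'.pres' ((E.quot E' X).Q)).q = (E.quot E' X).π :=
  (E.lmap_exists E' X).choose_spec

theorem PCD.uHom_exists (X : D) :
    ∃ α : (E'.quot E ((E.quot E' X).Q)).Q ⟶ X,
      (E'.quot E ((E.quot E' X).Q)).π ≫ α = E.z.map (E.kmap E' X) ≫ (E.pres' X).q := by
  apply (E'.quot E _).desc_exists
  rw [← Category.assoc, ← Category.assoc, ← E.z.map_comp, ← E.z.map_comp, E.char E']
  rw [E'.z.map_comp, E'.z.map_comp, Category.assoc, Category.assoc, E.kmap_spec E']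
  exact (E'.pres' _).w

noncomputable def PCD.uHom (X : D) : (E'.quot E ((E.quot E' X).Q)).Q ⟶ X :=
  (E.uHom_exists E' X).choose

theorem PCD.uHom_spec (X : D) :
    (E'.quot E ((E.quot E' X).Q)).π ≫ E.uHom E' X =
      E.z.map (E.kmap E' X) ≫ (E.pres' X).q :=
  (E.uHom_exists E' X).choose_spec

theorem PCD.uInv_exists (X : D) :
    ∃ β : X ⟶ (E'.quot E ((E.quot E' X).Q)).Q,
      (E.pres' X).q ≫ β = E.z.map (E.lmap E' X) ≫ (E'.quot E ((E.quot E' X).Q)).π := by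
  apply (E.pres' X).hq.desc
  have main : E.z.map ((E.pres' X).t₀ ≫ E.lmap E' X) ≫ (E'.quot E ((E.quot E' X).Q)).π =
      E.z.map ((E.pres' X).t₁ ≫ E.lmap E' X) ≫ (E'.quot E ((E.quot E' X).Q)).π := by
    apply (E'.char E _ _).mp
    rw [E'.z.map_comp, E'.z.map_comp, Category.assoc, Category.assoc, E.lmap_spec E']
    exact (E.quot E' X).w
  haveI : Epi (pullback.lift (E.z.map (E.pres' X).t₀) (E.z.map (E.pres' X).t₁)
      (E.pres' X).w : E.z.obj (E.pres' X).T ⟶ pullback (E.pres' X).q (E.pres' X).q) :=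
    (E.pres' X).he.epi
  rw [← cancel_epi (pullback.lift (E.z.map (E.pres' X).t₀) (E.z.map (E.pres' X).t₁)
      (E.pres' X).w : E.z.obj (E.pres' X).T ⟶ pullback (E.pres' X).q (E.pres' X).q)]
  calc pullback.lift (E.z.map (E.pres' X).t₀) (E.z.map (E.pres' X).t₁) (E.pres' X).w ≫
        pullback.fst (E.pres' X).q (E.pres' X).q ≫
          (E.z.map (E.lmap E' X) ≫ (E'.quot E ((E.quot E' X).Q)).π)
      = (pullback.lift (E.z.map (E.pres' X).t₀) (E.z.map (E.pres' X).t₁) (E.pres' X).w ≫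
          pullback.fst (E.pres' X).q (E.pres' X).q) ≫
          E.z.map (E.lmap E' X) ≫ (E'.quot E ((E.quot E' X).Q)).π := by simp
    _ = E.z.map (E.pres' X).t₀ ≫ E.z.map (E.lmap E' X) ≫ (E'.quot E ((E.quot E' X).Q)).π := by
        rw [pullback.lift_fst]
    _ = E.z.map ((E.pres' X).t₀ ≫ E.lmap E' X) ≫ (E'.quot E ((E.quot E' X).Q)).π := by
        rw [E.z.map_comp, Category.assoc]
    _ = E.z.map ((E.pres' X).t₁ ≫ E.lmap E' X) ≫ (E'.quot E ((E.quot E' X).Q)).π := main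
    _ = E.z.map (E.pres' X).t₁ ≫ E.z.map (E.lmap E' X) ≫ (E'.quot E ((E.quot E' X).Q)).π := by
        rw [E.z.map_comp, Category.assoc]
    _ = (pullback.lift (E.z.map (E.pres' X).t₀) (E.z.map (E.pres' X).t₁) (E.pres' X).w ≫
          pullback.snd (E.pres' X).q (E.pres' X).q) ≫
          E.z.map (E.lmap E' X) ≫ (E'.quot E ((E.quot E' X).Q)).π := by
        rw [pullback.lift_snd]
    _ = pullback.lift (E.z.map (E.pres' X).t₀) (E.z.map (E.pres' X).t₁) (E.pres' X).w ≫
        pullback.snd (E.pres' X).q (E.pres' X).q ≫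
          (E.z.map (E.lmap E' X) ≫ (E'.quot E ((E.quot E' X).Q)).π) := by simp

noncomputable def PCD.uInv (X : D) : X ⟶ (E'.quot E ((E.quot E' X).Q)).Q :=
  (E.uInv_exists E' X).choose

theorem PCD.uInv_spec (X : D) :
    (E.pres' X).q ≫ E.uInv E' X =
      E.z.map (E.lmap E' X) ≫ (E'.quot E ((E.quot E' X).Q)).π :=
  (E.uInv_exists E' X).choose_spec

theorem PCD.u_inv_hom (X : D) : E.uInv E' X ≫ E.uHom E' X = 𝟙 X := by
  haveI : Epi (E.pres' X).q := (E.pres' X).hq.epi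
  rw [← cancel_epi (E.pres' X).q, Category.comp_id]
  have h1 : E'.z.map (E.lmap E' X ≫ E.kmap E' X) ≫ (E.quot E' X).π =
      E'.z.map (𝟙 (E.pres' X).A) ≫ (E.quot E' X).π := by
    rw [E'.z.map_comp, Category.assoc, E.kmap_spec E', E.lmap_spec E', E'.z.map_id,
      Category.id_comp]
  have h2 := (E.char E' _ _).mpr h1
  calc (E.pres' X).q ≫ E.uInv E' X ≫ E.uHom E' X
      = ((E.pres' X).q ≫ E.uInv E' X) ≫ E.uHom E' X := by simp
    _ = E.z.map (E.lmap E' X) ≫ ((E'.quot E ((E.quot E' X).Q)).π ≫ E.uHom E' X) := by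
        rw [E.uInv_spec E', Category.assoc]
    _ = E.z.map (E.lmap E' X) ≫ E.z.map (E.kmap E' X) ≫ (E.pres' X).q := by
        rw [E.uHom_spec E']
    _ = E.z.map (E.lmap E' X ≫ E.kmap E' X) ≫ (E.pres' X).q := by
        rw [E.z.map_comp, Category.assoc]
    _ = E.z.map (𝟙 _) ≫ (E.pres' X).q := h2
    _ = (E.pres' X).q := by rw [E.z.map_id, Category.id_comp]

theorem PCD.u_hom_inv (X : D) :
    E.uHom E' X ≫ E.uInv E' X = 𝟙 ((E'.quot E ((E.quot E' X).Q)).Q) := by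
  haveI : Epi (E'.quot E ((E.quot E' X).Q)).π := (E'.quot E ((E.quot E' X).Q)).hπ.epi
  rw [← cancel_epi (E'.quot E ((E.quot E' X).Q)).π, Category.comp_id]
  have h1 : E'.z.map (E.kmap E' X ≫ E.lmap E' X) ≫ (E'.pres' ((E.quot E' X).Q)).q =
      E'.z.map (𝟙 _) ≫ (E'.pres' ((E.quot E' X).Q)).q := by
    rw [E'.z.map_comp, Category.assoc, E.lmap_spec E', E.kmap_spec E', E'.z.map_id,
      Category.id_comp]
  have h2 := (E'.char E _ _).mp h1
  calc (E'.quot E ((E.quot E' X).Q)).π ≫ E.uHom E' X ≫ E.uInv E' X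
      = ((E'.quot E ((E.quot E' X).Q)).π ≫ E.uHom E' X) ≫ E.uInv E' X := by simp
    _ = E.z.map (E.kmap E' X) ≫ ((E.pres' X).q ≫ E.uInv E' X) := by
        rw [E.uHom_spec E', Category.assoc]
    _ = E.z.map (E.kmap E' X) ≫ E.z.map (E.lmap E' X) ≫ (E'.quot E ((E.quot E' X).Q)).π := by
        rw [E.uInv_spec E']
    _ = E.z.map (E.kmap E' X ≫ E.lmap E' X) ≫ (E'.quot E ((E.quot E' X).Q)).π := by
        rw [E.z.map_comp, Category.assoc]
    _ = E.z.map (𝟙 _) ≫ (E'.quot E ((E.quot E' X).Q)).π := h2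
    _ = (E'.quot E ((E.quot E' X).Q)).π := by rw [E.z.map_id, Category.id_comp]

theorem PCD.u_natural {X Y : D} (f : X ⟶ Y) :
    E'.tmap E (E.tmap E' f) ≫ E.uHom E' Y = E.uHom E' X ≫ f := by
  haveI : Epi (E'.quot E ((E.quot E' X).Q)).π := (E'.quot E ((E.quot E' X).Q)).hπ.epi
  rw [← cancel_epi (E'.quot E ((E.quot E' X).Q)).π]
  have hg' := (PCD.lift_exists E' (E.tmap E' f)).choose_spec
  set g' := (PCD.lift_exists E' (E.tmap E' f)).choose with hg'def
  have hgf := (E.lift_exists f).choose_spec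
  set gf := (E.lift_exists f).choose with hgfdef
  have key : E.z.map (g' ≫ E.kmap E' Y) ≫ (E.pres' Y).q =
      E.z.map (E.kmap E' X ≫ gf) ≫ (E.pres' Y).q := by
    apply (E.char E' _ _).mpr
    rw [E'.z.map_comp, E'.z.map_comp, Category.assoc, Category.assoc, E.kmap_spec E' Y,
      ← E.tmap_fac E' f gf hgf, ← Category.assoc, E.kmap_spec E' X]
    exact hg'
  calc (E'.quot E ((E.quot E' X).Q)).π ≫ E'.tmap E (E.tmap E' f) ≫ E.uHom E' Y
      = ((E'.quot E ((E.quot E' X).Q)).π ≫ E'.tmap E (E.tmap E' f)) ≫ E.uHom E' Y := by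
        simp
    _ = (E.z.map g' ≫ (E'.quot E ((E.quot E' Y).Q)).π) ≫ E.uHom E' Y := by
        rw [E'.tmap_fac E (E.tmap E' f) g' hg']
    _ = E.z.map g' ≫ E.z.map (E.kmap E' Y) ≫ (E.pres' Y).q := by
        rw [Category.assoc, E.uHom_spec E' Y]
    _ = E.z.map (g' ≫ E.kmap E' Y) ≫ (E.pres' Y).q := by rw [E.z.map_comp, Category.assoc]
    _ = E.z.map (E.kmap E' X ≫ gf) ≫ (E.pres' Y).q := key
    _ = E.z.map (E.kmap E' X) ≫ E.z.map gf ≫ (E.pres' Y).q := by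
        rw [E.z.map_comp, Category.assoc]
    _ = E.z.map (E.kmap E' X) ≫ (E.pres' X).q ≫ f := by rw [hgf]
    _ = ((E'.quot E ((E.quot E' X).Q)).π ≫ E.uHom E' X) ≫ f := by
        rw [E.uHom_spec E' X, Category.assoc]
    _ = (E'.quot E ((E.quot E' X).Q)).π ≫ E.uHom E' X ≫ f := by simp

noncomputable def PCD.compIso : E.transfer E' ⋙ E'.transfer E ≅ 𝟭 D :=
  NatIso.ofComponents
    (fun X => ⟨E.uHom E' X, E.uInv E' X, E.u_hom_inv E' X, E.u_inv_hom E' X⟩)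
    (fun {X Y} f => E.u_natural E' f)

theorem PCD.toEquiv (F : PCD P D) (F' : PCD P D') : Nonempty (D ≌ D') :=
  ⟨CategoryTheory.Equivalence.mk (F.transfer F') (F'.transfer F) (F.compIso F').symm (F'.compIso F)⟩

end Unit


/-- If C is a regular category with enough projectives, whose projectives are
closed under finite limits, then the ex/reg-completion of C (an exact D with a
regular, fully faithful, covering, full-on-subobjects embedding y) is
equivalent to the ex/lex-completion of the full subcategory Proj(C) of
projectives (an exact D' with a finite-limit-preserving, fully faithful,
covering embedding y' whose image consists, up to isomorphism, of the
projectives of D'). -/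
theorem exReg_equiv_exLex_of_projectives
    {C : Type u} [Category.{v} C] {D : Type u₂} [Category.{v₂} D]
    {D' : Type u₃} [Category.{v₃} D']
    [RegularCat C] [ExactCat D] [ExactCat D']
    (hep : HasEnoughCovProjectives C)
    (hprojlim : ∀ (J : Type) [SmallCategory J] [FinCategory J] (F : J ⥤ C),
      (∀ j : J, CovProjective (F.obj j)) → CovProjective (limit F))
    -- y : C ⥤ D exhibits D as the ex/reg-completion of C
    (y : C ⥤ D) [y.Full] [y.Faithful]
    (hylex : PreservesFiniteLimits y)
    (hycov : ∀ {X Y : C} (f : Y ⟶ X), IsCover f → IsCover (y.map f))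
    (hycovering : ∀ Z : D, ∃ (A : C) (c : y.obj A ⟶ Z), IsCover c)
    (hyfullsub : ∀ (A : C) (S : D) (m : S ⟶ y.obj A), Mono m →
      ∃ (B : C) (n : B ⟶ A), Mono n ∧ ∃ e : y.obj B ≅ S, e.hom ≫ m = y.map n)
    -- y' : Proj(C) ⥤ D' exhibits D' as the ex/lex-completion of Proj(C)
    (y' : ObjectProperty.FullSubcategory (fun X : C => CovProjective X) ⥤ D') [y'.Full] [y'.Faithful]
    (hy'lex : PreservesFiniteLimits y')
    (hy'covering : ∀ Z : D', ∃ (A : ObjectProperty.FullSubcategory (fun X : C => CovProjective X))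
      (c : y'.obj A ⟶ Z), IsCover c)
    (hy'proj : ∀ A : ObjectProperty.FullSubcategory (fun X : C => CovProjective X),
      CovProjective (y'.obj A))
    (hy'projonto : ∀ Q : D', CovProjective Q →
      ∃ A : ObjectProperty.FullSubcategory (fun X : C => CovProjective X), Nonempty (y'.obj A ≅ Q)) :
    Nonempty (D ≌ D') := by
  haveI := hylex
  -- y reflects covers
  have yreflect : ∀ {A B : C} (f : A ⟶ B), IsCover (y.map f) → IsCover f := by
    intro A B f hf
    obtain ⟨W, e, m, he, hm, hfac⟩ := RegularCat.factor f
    haveI : Mono m := hm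
    have hym : y.map e ≫ y.map m = y.map f := by rw [← y.map_comp, hfac]
    haveI : IsIso (y.map m) := hf (y.map m) (y.map e) inferInstance hym
    haveI : IsIso m := isIso_of_fully_faithful y m
    rw [← hfac]
    exact he.comp_iso m
  -- the PCD structure on D via Proj(C)
  let E : PCD (ObjectProperty.FullSubcategory (fun X : C => CovProjective X)) D :=
    { z := ObjectProperty.ι _ ⋙ y
      full := inferInstance
      faithful := inferInstance
      proj := by
        intro A Z c hc
        obtain ⟨B, d, hd⟩ := hycovering Z
        have hcomp : IsCover (d ≫ c) := hd.comp hc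
        have hf : y.map (y.preimage (d ≫ c)) = d ≫ c := y.map_preimage _
        have hfc : IsCover (y.preimage (d ≫ c)) := yreflect _ (by rwa [hf])
        obtain ⟨s, hs⟩ := A.property (y.preimage (d ≫ c)) hfc
        refine ⟨y.map s ≫ d, ?_⟩
        rw [Category.assoc, ← hf, ← y.map_comp, hs]; simp
      covering := by
        intro X
        obtain ⟨A₀, c, hc⟩ := hycovering X
        obtain ⟨Pj, p, hPj, hp⟩ := hep A₀
        exact ⟨⟨Pj, hPj⟩, y.map p ≫ c, (hycov p hp).comp hc⟩ }
  let E' : PCD (ObjectProperty.FullSubcategory (fun X : C => CovProjective X)) D' :=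
    { z := y'
      full := inferInstance
      faithful := inferInstance
      proj := hy'proj
      covering := hy'covering }
  exact PCD.toEquiv E E'
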